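/- Let q, d ≥ 2 be integers, and suppose that the density δ(q, d; s) exists for every s ∈ ℤ^5. Then for every s = (θ_u, θ_w, θ_2, θ_1, θ_0) ∈ ℤ^5, δ(q, d; s) = (1/q)·Σ_{λ=0}^{q−1} δ(q, d; q·θ_u, (λ+1−q)·θ_u + θ_w, q·θ_u + q²·θ_2, (λ+1−q)·θ_u + θ_w + (λq − q(q−1)/2)·θ_2 + q·θ_1, (λ(λ+1)/2)·θ_2 + λ·θ_1 + θ_0). -/

import Mathlib

open Filter

/-- `vq q n` is the `q`-adic valuation: `0` if `n = 0`, and otherwise the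
largest `k` such that `q ^ k` divides `n`. -/
noncomputable def vq (q n : ℕ) : ℕ := if n = 0 then 0 else sSup {k : ℕ | q ^ k ∣ n}

/-- `wq q n = ∑_{i=0}^n vq q i`. -/
noncomputable def wq (q n : ℕ) : ℕ := ∑ i ∈ Finset.range (n + 1), vq q i

/-- `uq q n = ∑_{i=0}^n wq q i`. -/
noncomputable def uq (q n : ℕ) : ℕ := ∑ i ∈ Finset.range (n + 1), wq q i

/-- `gamma q d tu tw t2 t1 t0 A` is the number of `n < A` with
`tu·u_q(n) + tw·w_q(n) + t2·n(n+1)/2 + t1·n + t0 ≡ 0 (mod d)`. -/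
noncomputable def gamma (q d : ℕ) (tu tw t2 t1 t0 : ℤ) (A : ℕ) : ℕ :=
  ((Finset.range A).filter fun n =>
    (tu * uq q n + tw * wq q n + t2 * (n * (n + 1) / 2 : ℕ) + t1 * n + t0) % (d : ℤ) = 0).card

lemma vq_zero (q : ℕ) : vq q 0 = 0 := by simp [vq]

lemma bdd (q n : ℕ) (hq : 2 ≤ q) (hn : n ≠ 0) : BddAbove {k : ℕ | q ^ k ∣ n} := by
  refine ⟨n, fun k hk => ?_⟩
  calc k ≤ 2 ^ k := Nat.le_of_lt (Nat.lt_two_pow_self (n := k))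
  _ ≤ q ^ k := Nat.pow_le_pow_left hq k
  _ ≤ n := Nat.le_of_dvd (Nat.pos_of_ne_zero hn) hk

lemma vq_not_dvd {q n : ℕ} (hq : 2 ≤ q) (h : ¬ q ∣ n) : vq q n = 0 := by
  have hn : n ≠ 0 := by rintro rfl; exact h (dvd_zero q)
  have : {k : ℕ | q ^ k ∣ n} = {0} := by
    ext k
    simp only [Set.mem_setOf_eq, Set.mem_singleton_iff]
    constructor
    · intro hk
      by_contra hk0
      exact h (dvd_trans (dvd_pow_self q hk0) hk)
    · rintro rfl; simp
  simp [vq, hn, this]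

lemma vq_mul {q j : ℕ} (hq : 2 ≤ q) (hj : j ≠ 0) : vq q (q * j) = vq q j + 1 := by
  have hq0 : q ≠ 0 := by omega
  have hqj : q * j ≠ 0 := by positivity
  have h1 : vq q j ∈ {k : ℕ | q ^ k ∣ j} := by
    simp only [vq, if_neg hj]
    exact Nat.sSup_mem ⟨0, by simp⟩ (bdd q j hq hj)
  simp only [vq, if_neg hj, if_neg hqj]
  apply le_antisymm
  · apply csSup_le ⟨0, by simp⟩
    intro b hb
    rcases Nat.eq_zero_or_pos b with rfl | hbpos
    · omega
    · have : q ^ (b - 1) ∣ j := by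
        have hd : q ^ b ∣ q * j := hb
        have : q * q ^ (b-1) ∣ q * j := by
          rw [← pow_succ']
          rwa [Nat.sub_add_cancel hbpos]
        exact (mul_dvd_mul_iff_left hq0).mp this
      have : b - 1 ≤ sSup {k : ℕ | q ^ k ∣ j} := le_csSup (bdd q j hq hj) this
      omega
  · apply le_csSup (bdd q (q*j) hq hqj)
    show q ^ (sSup {k : ℕ | q ^ k ∣ j} + 1) ∣ q * j
    rw [pow_succ]
    have h1' : q ^ sSup {k : ℕ | q ^ k ∣ j} ∣ j := by simpa [vq, if_neg hj] using h1
    rw [mul_comm q j]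
    exact mul_dvd_mul h1' dvd_rfl

lemma wq_succ (q n : ℕ) : wq q (n + 1) = wq q n + vq q (n + 1) :=
  Finset.sum_range_succ _ _

lemma uq_succ (q n : ℕ) : uq q (n + 1) = uq q n + wq q (n + 1) :=
  Finset.sum_range_succ _ _

lemma wq_zero (q : ℕ) : wq q 0 = 0 := by simp [wq, vq_zero]
lemma uq_zero (q : ℕ) : uq q 0 = 0 := by simp [uq, wq_zero]

lemma wq_qm_add {q : ℕ} (hq : 2 ≤ q) (m : ℕ) : ∀ l, l < q → wq q (q * m + l) = wq q (q * m) := by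
  intro l hl
  induction l with
  | zero => rfl
  | succ k ih =>
    have hk : k < q := by omega
    rw [← Nat.add_assoc, wq_succ, ih hk, vq_not_dvd hq, Nat.add_zero]
    intro hdvd
    have : q ∣ k + 1 := (Nat.dvd_add_right ⟨m, rfl⟩).mp (by rwa [Nat.add_assoc] at hdvd)
    have := Nat.le_of_dvd (by omega) this
    omega

lemma wq_q_mul {q : ℕ} (hq : 2 ≤ q) (m : ℕ) : wq q (q * m) = m + wq q m := by
  induction m with
  | zero => simp
  | succ m ih =>
    have h1 : q * (m + 1) = (q * m + (q - 1)) + 1 := by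
      ring_nf
      omega
    rw [h1, wq_succ, wq_qm_add hq m (q-1) (by omega), ih, ← h1, vq_mul hq (by omega),
      wq_succ]
    ring

lemma wq_key {q : ℕ} (hq : 2 ≤ q) (m l : ℕ) (hl : l < q) : wq q (q * m + l) = m + wq q m := by
  rw [wq_qm_add hq m l hl, wq_q_mul hq]

lemma uq_qm_add {q : ℕ} (hq : 2 ≤ q) (m : ℕ) :
    ∀ l, l < q → uq q (q * m + l) = uq q (q * m) + l * (m + wq q m) := by
  intro l hl
  induction l with
  | zero => simp
  | succ k ih =>
    have hk : k < q := by omega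
    rw [← Nat.add_assoc, uq_succ, ih hk, Nat.add_assoc (q*m) k 1, wq_key hq m (k+1) hl]
    ring

lemma uq_q_mul {q : ℕ} (hq : 2 ≤ q) (m : ℕ) :
    2 * (uq q (q * m) : ℤ) + 2 * q * wq q m
      = 2 * q * uq q m + 2 * wq q m + q * m * ((m : ℤ) - 1) + 2 * m := by
  induction m with
  | zero => simp [uq_zero, wq_zero]
  | succ m ih =>
    have h1 : q * (m + 1) = (q * m + (q - 1)) + 1 := by
      ring_nf
      omega
    have h2 : uq q (q * (m+1)) = uq q (q * m) + (q - 1) * (m + wq q m) + wq q (q * (m+1)) := by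
      rw [h1, uq_succ, uq_qm_add hq m (q-1) (by omega), ← h1]
    have h3 : wq q (q * (m+1)) = (m + 1) + wq q (m + 1) := wq_q_mul hq (m+1)
    have h4 : wq q (m + 1) = wq q m + vq q (m + 1) := wq_succ q m
    have h5 : uq q (m + 1) = uq q m + wq q (m + 1) := uq_succ q m
    have hq1 : ((q - 1 : ℕ) : ℤ) = (q : ℤ) - 1 := by
      push_cast [Nat.cast_sub (by omega : 1 ≤ q)]; ring
    rw [h2]
    push_cast [h3, h4, h5, hq1]
    push_cast [h4, h5] at ih ⊢
    linarith [ih, mul_comm (q:ℤ) (m:ℤ)]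

lemma tri_cast (n : ℕ) : ((n * (n + 1) / 2 : ℕ) : ℤ) * 2 = ((n * (n + 1) : ℕ) : ℤ) := by
  have h : 2 ∣ n * (n + 1) := (Nat.even_mul_succ_self n).two_dvd
  exact_mod_cast congrArg (Nat.cast : ℕ → ℤ) (Nat.div_mul_cancel h)

lemma triq_cast {q : ℕ} (hq : 2 ≤ q) :
    ((q * (q - 1) / 2 : ℕ) : ℤ) * 2 = (q : ℤ) * ((q : ℤ) - 1) := by
  have h1 : q * (q - 1) = (q - 1) * ((q - 1) + 1) := by
    rw [Nat.sub_add_cancel (by omega)]; ring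
  have h : 2 ∣ q * (q - 1) := by rw [h1]; exact (Nat.even_mul_succ_self (q-1)).two_dvd
  have h2 : ((q * (q - 1) / 2 : ℕ) : ℤ) * 2 = ((q * (q - 1) : ℕ) : ℤ) := by
    exact_mod_cast congrArg (Nat.cast : ℕ → ℤ) (Nat.div_mul_cancel h)
  rw [h2, Nat.cast_mul, Nat.cast_sub (by omega : 1 ≤ q)]
  norm_num

lemma uq_key {q : ℕ} (hq : 2 ≤ q) (m l : ℕ) (hl : l < q) :
    2 * (uq q (q * m + l) : ℤ)
      = 2 * q * uq q m + 2 * ((l : ℤ) + 1 - q) * wq q m + q * m * ((m : ℤ) - 1)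
        + 2 * ((l : ℤ) + 1) * m := by
  have h2 := uq_q_mul hq m
  have h3 : (uq q (q * m + l) : ℤ) = uq q (q * m) + l * ((m : ℤ) + wq q m) := by
    rw [uq_qm_add hq m l hl]; push_cast; ring
  linarith [h3, h2]

lemma form_key {q : ℕ} (hq : 2 ≤ q) (tu tw t2 t1 t0 : ℤ) (m l : ℕ) (hl : l < q) :
    tu * (uq q (q * m + l) : ℤ) + tw * (wq q (q * m + l) : ℤ)
        + t2 * (((q * m + l) * ((q * m + l) + 1) / 2 : ℕ) : ℤ) + t1 * ((q * m + l : ℕ) : ℤ) + t0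
      = ((q : ℤ) * tu) * (uq q m : ℤ) + (((l : ℤ) + 1 - q) * tu + tw) * (wq q m : ℤ)
        + ((q : ℤ) * tu + (q : ℤ) ^ 2 * t2) * ((m * (m + 1) / 2 : ℕ) : ℤ)
        + (((l : ℤ) + 1 - q) * tu + tw + ((l : ℤ) * q - ((q * (q - 1) / 2 : ℕ) : ℤ)) * t2
            + (q : ℤ) * t1) * (m : ℤ)
        + (((l * (l + 1) / 2 : ℕ) : ℤ) * t2 + (l : ℤ) * t1 + t0) := by
  have hU := uq_key hq m l hl
  have hG : (wq q (q * m + l) : ℤ) = (m : ℤ) + wq q m := by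
    rw [wq_key hq m l hl]; push_cast; ring
  have hTn := tri_cast (q * m + l)
  have hTm := tri_cast m
  have hTl := tri_cast l
  have hTq := triq_cast hq
  generalize hD1 : (((q * m + l) * ((q * m + l) + 1) / 2 : ℕ) : ℤ) = D1 at hTn ⊢
  generalize hD2 : ((m * (m + 1) / 2 : ℕ) : ℤ) = D2 at hTm ⊢
  generalize hD3 : ((q * (q - 1) / 2 : ℕ) : ℤ) = D3 at hTq ⊢
  generalize hD4 : ((l * (l + 1) / 2 : ℕ) : ℤ) = D4 at hTl ⊢
  generalize hU1 : (uq q (q * m + l) : ℤ) = U1 at hU ⊢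
  generalize hW1 : (wq q (q * m + l) : ℤ) = W1 at hG ⊢
  generalize hU0 : (uq q m : ℤ) = U0 at hU ⊢
  generalize hW0 : (wq q m : ℤ) = W0 at hU hG ⊢
  apply mul_left_cancel₀ (two_ne_zero' ℤ)
  push_cast at hTn hTm hTl ⊢
  linear_combination tu * hU + 2 * tw * hG + t2 * hTn - ((q:ℤ) * tu + (q:ℤ)^2 * t2) * hTm
    + (m : ℤ) * t2 * hTq - t2 * hTl

lemma sum_range_mul {M : Type*} [AddCommMonoid M] (q N : ℕ) (f : ℕ → M) :
    ∑ i ∈ Finset.range (q * N), f i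
      = ∑ m ∈ Finset.range N, ∑ l ∈ Finset.range q, f (q * m + l) := by
  induction N with
  | zero => simp
  | succ N ih =>
    have h : q * (N + 1) = q * N + q := by ring
    rw [h, Finset.sum_range_add, ih, Finset.sum_range_succ]

lemma gamma_split {q : ℕ} (hq : 2 ≤ q) (d : ℕ) (tu tw t2 t1 t0 : ℤ) (N : ℕ) :
    gamma q d tu tw t2 t1 t0 (q * N)
      = ∑ l ∈ Finset.range q,
          gamma q d ((q : ℤ) * tu) (((l : ℤ) + 1 - q) * tu + tw)
            ((q : ℤ) * tu + (q : ℤ) ^ 2 * t2)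
            (((l : ℤ) + 1 - q) * tu + tw + ((l : ℤ) * q - ((q * (q - 1) / 2 : ℕ) : ℤ)) * t2
              + (q : ℤ) * t1)
            (((l * (l + 1) / 2 : ℕ) : ℤ) * t2 + (l : ℤ) * t1 + t0) N := by
  unfold gamma
  rw [Finset.card_filter, sum_range_mul]
  rw [Finset.sum_comm]
  apply Finset.sum_congr rfl
  intro l hl
  rw [Finset.card_filter]
  apply Finset.sum_congr rfl
  intro m _
  have hl' : l < q := Finset.mem_range.mp hl
  simp only [form_key hq tu tw t2 t1 t0 m l hl']

lemma gamma_zero (q d : ℕ) (tu tw t2 t1 t0 : ℤ) : gamma q d tu tw t2 t1 t0 0 = 0 := by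
  simp [gamma]

theorem stmt_5 (q d : ℕ) (hq : 2 ≤ q) (hd : 2 ≤ d)
    (delta : ℤ → ℤ → ℤ → ℤ → ℤ → ℝ)
    (hdelta : ∀ tu tw t2 t1 t0 : ℤ,
      Tendsto (fun N : ℕ => (gamma q d tu tw t2 t1 t0 N : ℝ) / N) atTop
        (nhds (delta tu tw t2 t1 t0)))
    (tu tw t2 t1 t0 : ℤ) :
    delta tu tw t2 t1 t0 =
      (1 / (q : ℝ)) * ∑ lam ∈ Finset.range q,
        delta
          ((q : ℤ) * tu)
          (((lam : ℤ) + 1 - q) * tu + tw)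
          ((q : ℤ) * tu + (q : ℤ) ^ 2 * t2)
          (((lam : ℤ) + 1 - q) * tu + tw + ((lam : ℤ) * q - (q * (q - 1) / 2 : ℕ)) * t2
            + (q : ℤ) * t1)
          ((lam * (lam + 1) / 2 : ℕ) * t2 + (lam : ℤ) * t1 + t0) := by
  have hmul : Tendsto (fun N : ℕ => q * N) atTop atTop := by
    apply tendsto_atTop_mono (fun n => Nat.le_mul_of_pos_left n (by omega : 0 < q))
    exact tendsto_id
  have h1 : Tendsto (fun N : ℕ => (gamma q d tu tw t2 t1 t0 (q * N) : ℝ) / (q * N : ℕ)) atTop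
      (nhds (delta tu tw t2 t1 t0)) := (hdelta tu tw t2 t1 t0).comp hmul
  have h2 : Tendsto (fun N : ℕ => (1 / (q : ℝ)) * ∑ l ∈ Finset.range q,
      (gamma q d ((q : ℤ) * tu) (((l : ℤ) + 1 - q) * tu + tw)
        ((q : ℤ) * tu + (q : ℤ) ^ 2 * t2)
        (((l : ℤ) + 1 - q) * tu + tw + ((l : ℤ) * q - ((q * (q - 1) / 2 : ℕ) : ℤ)) * t2
          + (q : ℤ) * t1)
        (((l * (l + 1) / 2 : ℕ) : ℤ) * t2 + (l : ℤ) * t1 + t0) N : ℝ) / N) atTop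
      (nhds ((1 / (q : ℝ)) * ∑ lam ∈ Finset.range q,
        delta ((q : ℤ) * tu) (((lam : ℤ) + 1 - q) * tu + tw)
          ((q : ℤ) * tu + (q : ℤ) ^ 2 * t2)
          (((lam : ℤ) + 1 - q) * tu + tw + ((lam : ℤ) * q - (q * (q - 1) / 2 : ℕ)) * t2
            + (q : ℤ) * t1)
          ((lam * (lam + 1) / 2 : ℕ) * t2 + (lam : ℤ) * t1 + t0))) := by
    apply Tendsto.const_mul
    exact tendsto_finset_sum _ (fun l _ => hdelta _ _ _ _ _)
  have heq : (fun N : ℕ => (gamma q d tu tw t2 t1 t0 (q * N) : ℝ) / (q * N : ℕ))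
      = (fun N : ℕ => (1 / (q : ℝ)) * ∑ l ∈ Finset.range q,
        (gamma q d ((q : ℤ) * tu) (((l : ℤ) + 1 - q) * tu + tw)
          ((q : ℤ) * tu + (q : ℤ) ^ 2 * t2)
          (((l : ℤ) + 1 - q) * tu + tw + ((l : ℤ) * q - ((q * (q - 1) / 2 : ℕ) : ℤ)) * t2
            + (q : ℤ) * t1)
          (((l * (l + 1) / 2 : ℕ) : ℤ) * t2 + (l : ℤ) * t1 + t0) N : ℝ) / N) := by
    funext N
    rw [gamma_split hq d tu tw t2 t1 t0 N]
    rw [Nat.cast_sum, Finset.sum_div, Finset.mul_sum]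
    apply Finset.sum_congr rfl
    intro l _
    rw [Nat.cast_mul]
    rw [div_mul_eq_div_div_swap, one_div, inv_mul_eq_div, div_div]
  rw [heq] at h1
  exact tendsto_nhds_unique h1 h2
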